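/- Fix n ≥ 1 and for 1 ≤ i ≤ n let σ_i ∈ S_n be defined by σ_n = 1 and σ_i = s_i s_{i+1} ⋯ s_{n-1} for i < n. Then for every k ≥ 0, the element Σ_{i=1}^{n} σ_i X_n^k σ_i^{-1} of ℂ[S_n] lies in the center of ℂ[S_n], where X_n = Σ_{j=1}^{n-1} (j, n) is the Jucys–Murphy element of ℂ[S_n]. -/

import Mathlib

/-- The adjacent transposition `s_m = (m, m+1)` (with `1 ≤ m ≤ n-1`, elements of
`S_n` being permutations of `{1, …, n}` modelled as `Fin n`, so `m` is 0-indexed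
as `m - 1`); junk value `1` when `m` is out of range. -/
def adjTransposition (n m : ℕ) : Equiv.Perm (Fin n) :=
  if h : 1 ≤ m ∧ m < n then Equiv.swap ⟨m - 1, by omega⟩ ⟨m, h.2⟩ else 1

/-- `σ_i = s_i s_{i+1} ⋯ s_{n-1}` (so in particular `σ_n = 1`). -/
def sigmaRep (n i : ℕ) : Equiv.Perm (Fin n) :=
  ((List.range' i (n - i)).map (adjTransposition n)).prod

lemma sigmaRep_aux (n : ℕ) (d : ℕ) : ∀ i : ℕ, ∀ hd : i + d = n, ∀ h1 : 1 ≤ i,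
    sigmaRep n i ⟨n - 1, by omega⟩ = ⟨i - 1, by omega⟩ := by
  induction d with
  | zero =>
      intro i hi _
      subst hi
      simp [sigmaRep]
  | succ d ih =>
      intro i hi h1
      have hlt : i < n := by omega
      have hr : List.range' i (n - i) = i :: List.range' (i+1) (n - (i+1)) := by
        have : n - i = (n - (i+1)) + 1 := by omega
        rw [this, List.range'_succ]
      have hstep : sigmaRep n i = adjTransposition n i * sigmaRep n (i+1) := by
        simp [sigmaRep, hr]
      have ih' := ih (i+1) (by omega) (by omega)
      rw [hstep]
      simp only [Equiv.Perm.mul_apply, ih']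
      simp only [adjTransposition, dif_pos (⟨h1, hlt⟩ : 1 ≤ i ∧ i < n)]
      have : (⟨i + 1 - 1, by omega⟩ : Fin n) = ⟨i, hlt⟩ := by simp
      rw [this, Equiv.swap_apply_right]

lemma sigmaRep_apply_last (n i : ℕ) (h1 : 1 ≤ i) (h2 : i ≤ n) :
    sigmaRep n i ⟨n - 1, by omega⟩ = ⟨i - 1, by omega⟩ :=
  sigmaRep_aux n (n - i) i (by omega) h1

lemma of_comm_X (n : ℕ) (hn : 1 ≤ n) (π : Equiv.Perm (Fin n))
    (hπ : π ⟨n - 1, (by omega : n - 1 < n + 0)⟩ = ⟨n - 1, (by omega : n - 1 < n + 0)⟩) :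
    Commute (MonoidAlgebra.of ℂ (Equiv.Perm (Fin n)) π)
      (∑ j : Fin (n - 1), MonoidAlgebra.of ℂ (Equiv.Perm (Fin n))
        (Equiv.swap (Fin.castLE (Nat.sub_le n 1) j) ⟨n - 1, (by omega : n - 1 < n + 0)⟩)) := by
  rw [Commute, SemiconjBy, Finset.mul_sum, Finset.sum_mul]
  have hlt : ∀ j : Fin (n - 1),
      (π (Fin.castLE (Nat.sub_le n 1) j)).val < n - 1 := by
    intro j
    have hne : π (Fin.castLE (Nat.sub_le n 1) j) ≠ ⟨n - 1, by omega⟩ := by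
      intro h
      have h2 : Fin.castLE (Nat.sub_le n 1) j = ⟨n - 1, by omega⟩ :=
        π.injective (h.trans hπ.symm)
      have := j.isLt
      have hv : (j : ℕ) = n - 1 := congrArg Fin.val h2
      omega
    have hv : (π (Fin.castLE (Nat.sub_le n 1) j)).val ≠ n - 1 :=
      fun h => hne (Fin.ext h)
    have := (π (Fin.castLE (Nat.sub_le n 1) j)).isLt
    omega
  have hinj : Function.Injective
      (fun j : Fin (n - 1) =>
        (⟨(π (Fin.castLE (Nat.sub_le n 1) j)).val, hlt j⟩ : Fin (n - 1))) := by
    intro j₁ j₂ h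
    simp only [Fin.mk.injEq] at h
    exact Fin.castLE_injective _ (π.injective (Fin.ext h))
  refine Fintype.sum_bijective _ (Finite.injective_iff_bijective.mp hinj) _ _
    fun j => ?_
  rw [← map_mul, ← map_mul]
  congr 1
  rw [Equiv.mul_swap_eq_swap_mul, hπ]
  congr 1

lemma conj_term (n k : ℕ) (hn : 1 ≤ n) (g : Equiv.Perm (Fin n)) (i : ℕ)
    (h1 : 1 ≤ i) (h2 : i ≤ n) :
    MonoidAlgebra.of ℂ (Equiv.Perm (Fin n)) g *
      (MonoidAlgebra.of ℂ (Equiv.Perm (Fin n)) (sigmaRep n i)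
        * (∑ j : Fin (n - 1), MonoidAlgebra.of ℂ (Equiv.Perm (Fin n))
            (Equiv.swap (Fin.castLE (Nat.sub_le n 1) j) ⟨n - 1, (by omega : n - 1 < n + 0)⟩)) ^ k
        * MonoidAlgebra.of ℂ (Equiv.Perm (Fin n)) (sigmaRep n i)⁻¹)
    = (MonoidAlgebra.of ℂ (Equiv.Perm (Fin n))
          (sigmaRep n ((g ⟨i - 1, by omega⟩).val + 1))
        * (∑ j : Fin (n - 1), MonoidAlgebra.of ℂ (Equiv.Perm (Fin n))
            (Equiv.swap (Fin.castLE (Nat.sub_le n 1) j) ⟨n - 1, (by omega : n - 1 < n + 0)⟩)) ^ k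
        * MonoidAlgebra.of ℂ (Equiv.Perm (Fin n))
            (sigmaRep n ((g ⟨i - 1, by omega⟩).val + 1))⁻¹)
      * MonoidAlgebra.of ℂ (Equiv.Perm (Fin n)) g := by
  set jn : ℕ := (g ⟨i - 1, by omega⟩).val + 1 with hjn
  have hj1 : 1 ≤ jn := by omega
  have hj2 : jn ≤ n := by
    have := (g ⟨i - 1, by omega⟩).isLt
    omega
  set π : Equiv.Perm (Fin n) := (sigmaRep n jn)⁻¹ * g * sigmaRep n i with hπdef
  have hπ : π ⟨n - 1, by omega⟩ = ⟨n - 1, by omega⟩ := by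
    have hσi := sigmaRep_apply_last n i h1 h2
    have hσj := sigmaRep_apply_last n jn hj1 hj2
    have hjval : (⟨jn - 1, by omega⟩ : Fin n) = g ⟨i - 1, by omega⟩ := by
      apply Fin.ext
      simp [hjn]
    rw [hπdef]
    simp only [Equiv.Perm.mul_apply, hσi]
    rw [← hjval, ← hσj, Equiv.Perm.coe_inv, Equiv.symm_apply_apply]
  have hcomm := (of_comm_X n hn π hπ).pow_right k
  have h1' : g * sigmaRep n i = sigmaRep n jn * π := by
    rw [hπdef]; group
  have h2' : π * (sigmaRep n i)⁻¹ = (sigmaRep n jn)⁻¹ * g := by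
    rw [hπdef]; group
  simp only [← mul_assoc]
  rw [← map_mul, h1', map_mul]
  rw [mul_assoc (MonoidAlgebra.of ℂ (Equiv.Perm (Fin n)) (sigmaRep n jn)),
    hcomm.eq, ← mul_assoc]
  rw [mul_assoc _ (MonoidAlgebra.of ℂ (Equiv.Perm (Fin n)) π), ← map_mul, h2',
    map_mul, ← mul_assoc]


/-- For `n ≥ 1` and every `k ≥ 0`, the element `Σ_{i=1}^{n} σ_i X_n^k σ_i⁻¹` of
`ℂ[S_n]` lies in the center of `ℂ[S_n]`, where `σ_n = 1`, `σ_i = s_i s_{i+1} ⋯ s_{n-1}`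
for `i < n`, and `X_n = Σ_{j=1}^{n-1} (j, n)` is the Jucys–Murphy element. -/
theorem sum_conj_jucysMurphy_pow_mem_center (n k : ℕ) (hn : 1 ≤ n) :
    (∑ i ∈ Finset.Icc 1 n,
        MonoidAlgebra.of ℂ (Equiv.Perm (Fin n)) (sigmaRep n i)
          * (∑ j : Fin (n - 1), MonoidAlgebra.of ℂ (Equiv.Perm (Fin n))
              (Equiv.swap (Fin.castLE (Nat.sub_le n 1) j) ⟨n - 1, by omega⟩)) ^ k
          * MonoidAlgebra.of ℂ (Equiv.Perm (Fin n)) (sigmaRep n i)⁻¹)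
      ∈ Subalgebra.center ℂ (MonoidAlgebra ℂ (Equiv.Perm (Fin n))) := by
  rw [Subalgebra.mem_center_iff]
  intro b
  induction b using MonoidAlgebra.induction_on with
  | add f f' hf hf' => rw [add_mul, mul_add, hf, hf']
  | smul r f hf => rw [smul_mul_assoc, mul_smul_comm, hf]
  | of g =>
    set T : ℕ → MonoidAlgebra ℂ (Equiv.Perm (Fin n)) := fun i =>
      MonoidAlgebra.of ℂ (Equiv.Perm (Fin n)) (sigmaRep n i)
        * (∑ j : Fin (n - 1), MonoidAlgebra.of ℂ (Equiv.Perm (Fin n))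
            (Equiv.swap (Fin.castLE (Nat.sub_le n 1) j) ⟨n - 1, by omega⟩)) ^ k
        * MonoidAlgebra.of ℂ (Equiv.Perm (Fin n)) (sigmaRep n i)⁻¹ with hT
    set J : ℕ → ℕ := fun i =>
      (g ⟨(i - 1) % n, Nat.mod_lt _ (by omega)⟩).val + 1 with hJ
    set J' : ℕ → ℕ := fun i =>
      (g⁻¹ ⟨(i - 1) % n, Nat.mod_lt _ (by omega)⟩).val + 1 with hJ'
    have key : ∀ i ∈ Finset.Icc 1 n,
        MonoidAlgebra.of ℂ (Equiv.Perm (Fin n)) g * T i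
          = T (J i) * MonoidAlgebra.of ℂ (Equiv.Perm (Fin n)) g := by
      intro i hi
      rw [Finset.mem_Icc] at hi
      have hmod : (i - 1) % n = i - 1 := Nat.mod_eq_of_lt (by omega)
      have hJi : J i = (g ⟨i - 1, by omega⟩).val + 1 := by
        simp only [hJ]
        congr 2
        exact Fin.ext (by simp [hmod])
      rw [hJi, hT]
      exact conj_term n k hn g i hi.1 hi.2
    rw [Finset.mul_sum, Finset.sum_congr rfl key, ← Finset.sum_mul]
    congr 1
    have hmem : ∀ (h : Equiv.Perm (Fin n)) (i : ℕ), i ∈ Finset.Icc 1 n →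
        (fun i => (h ⟨(i - 1) % n, Nat.mod_lt _ (by omega)⟩).val + 1) i
          ∈ Finset.Icc 1 n := by
      intro h i hi
      rw [Finset.mem_Icc]
      exact ⟨Nat.le_add_left 1 _, Fin.isLt _⟩
    have hinv : ∀ (h : Equiv.Perm (Fin n)) (i : ℕ), i ∈ Finset.Icc 1 n →
        (h⁻¹ ⟨((h ⟨(i - 1) % n, Nat.mod_lt _ (by omega)⟩).val + 1 - 1) % n,
            Nat.mod_lt _ (by omega)⟩).val + 1 = i := by
      intro h i hi
      rw [Finset.mem_Icc] at hi
      have hlt : (h ⟨(i - 1) % n, Nat.mod_lt _ (by omega)⟩).val < n :=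
        Fin.isLt _
      have : (⟨((h ⟨(i - 1) % n, Nat.mod_lt _ (by omega)⟩).val + 1 - 1) % n,
          Nat.mod_lt _ (by omega)⟩ : Fin n)
          = h ⟨(i - 1) % n, Nat.mod_lt _ (by omega)⟩ := by
        apply Fin.ext
        simp [Nat.mod_eq_of_lt hlt]
      rw [this, Equiv.Perm.coe_inv, Equiv.symm_apply_apply]
      have hmod : (i - 1) % n = i - 1 := Nat.mod_eq_of_lt (by omega)
      simp [hmod]
      omega
    refine Finset.sum_nbij' J J' (fun a ha => hmem g a ha)
      (fun a ha => hmem g⁻¹ a ha) (fun a ha => ?_) (fun a ha => ?_)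
      (fun a ha => rfl)
    · exact hinv g a ha
    · simpa [hJ, hJ'] using hinv g⁻¹ a ha
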